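/- Let (Ω, μ) and (Γ, ν) be finite measure spaces with μ(Ω) > 0 and ν(Γ) > 0, let M₁, M₂ > 0, and let u_∞, w_∞, z_∞ > 0 be the constants satisfying μ(Ω) u_∞ + ν(Γ) z_∞ = M₁, ν(Γ)(w_∞ + z_∞) = M₂ and u_∞ w_∞ = z_∞. Then there exists a constant C > 0, depending only on M₁ and M₂, such that for all nonnegative measurable functions u : Ω → ℝ and w, z : Γ → ℝ with u(log u − 1) ∈ L¹(μ), w(log w − 1), z(log z − 1) ∈ L¹(ν), satisfying the conservation laws ∫_Ω u dμ + ∫_Γ z dν = M₁ and ∫_Γ (w + z) dν = M₂, one has E(u,w,z) − E(u_∞, w_∞, z_∞) ≥ C ( ‖u − u_∞‖_{L¹(μ)}² + ‖w − w_∞‖_{L¹(ν)}² + ‖z − z_∞‖_{L¹(ν)}² ). -/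

import Mathlib

open MeasureTheory

lemma ckp_log_lb {t : ℝ} (ht : 0 < t) : 1 - 1/t ≤ Real.log t := by
  have h := Real.log_le_sub_one_of_pos (show (0:ℝ) < 1/t by positivity)
  rw [one_div, Real.log_inv] at h
  rw [one_div]; linarith

lemma ckp_F_deriv {t : ℝ} (ht : 0 < t) :
    HasDerivAt (fun s => (s+1)*Real.log s - 2*(s-1)) (Real.log t + 1/t - 1) t := by
  have h1 : HasDerivAt (fun s : ℝ => (s+1)*Real.log s)
      (1 * Real.log t + (t+1) * t⁻¹) t :=
    ((hasDerivAt_id t).add_const 1).mul (Real.hasDerivAt_log ht.ne')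
  have h2 : HasDerivAt (fun s : ℝ => 2*(s-1)) 2 t := by
    simpa using ((hasDerivAt_id t).sub_const 1).const_mul (2:ℝ)
  have := h1.sub h2
  refine this.congr_deriv ?_
  field_simp
  ring

lemma ckp_F_monotone : MonotoneOn (fun s => (s+1)*Real.log s - 2*(s-1)) (Set.Ioi (0:ℝ)) := by
  have hint : interior (Set.Ioi (0:ℝ)) = Set.Ioi 0 := interior_Ioi
  apply monotoneOn_of_deriv_nonneg (convex_Ioi 0)
  · intro x hx
    exact ((ckp_F_deriv hx).continuousAt).continuousWithinAt
  · rw [hint]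
    intro x hx
    exact (ckp_F_deriv hx).differentiableAt.differentiableWithinAt
  · rw [hint]
    intro x hx
    rw [(ckp_F_deriv hx).deriv]
    have := ckp_log_lb hx
    linarith

lemma ckp_F_sign {t : ℝ} (ht : 0 < t) :
    (1 ≤ t → 0 ≤ (t+1)*Real.log t - 2*(t-1)) ∧
    (t ≤ 1 → (t+1)*Real.log t - 2*(t-1) ≤ 0) := by
  have h1 : (1:ℝ) ∈ Set.Ioi (0:ℝ) := by norm_num
  constructor
  · intro h
    have := ckp_F_monotone h1 (Set.mem_Ioi.mpr ht) h
    simpa using this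
  · intro h
    have := ckp_F_monotone (Set.mem_Ioi.mpr ht) h1 h
    simpa using this

lemma ckp_G_deriv {t : ℝ} (ht : 0 < t) :
    HasDerivAt (fun s => (2*s+4)*(s*Real.log s - s + 1) - 3*(s-1)^2)
      (4*((t+1)*Real.log t - 2*(t-1))) t := by
  have hlog : HasDerivAt (fun s : ℝ => s*Real.log s) (1 * Real.log t + t * t⁻¹) t :=
    (hasDerivAt_id t).mul (Real.hasDerivAt_log ht.ne')
  have h1 : HasDerivAt (fun s : ℝ => s*Real.log s - s + 1)
      (1 * Real.log t + t * t⁻¹ - 1) t := by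
    simpa using (hlog.sub (hasDerivAt_id t)).add_const 1
  have h2 : HasDerivAt (fun s : ℝ => 2*s+4) 2 t := by
    simpa using ((hasDerivAt_id t).const_mul (2:ℝ)).add_const 4
  have h3 : HasDerivAt (fun s : ℝ => 3*(s-1)^2) (3*(2*(t-1))) t := by
    simpa using (((hasDerivAt_id t).sub_const 1).pow 2).const_mul (3:ℝ)
  have := (h2.mul h1).sub h3
  refine this.congr_deriv ?_
  have : t * t⁻¹ = 1 := mul_inv_cancel₀ ht.ne'
  rw [this]
  ring

lemma ckp_G_nonneg {t : ℝ} (ht : 0 < t) :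
    0 ≤ (2*t+4)*(t*Real.log t - t + 1) - 3*(t-1)^2 := by
  set G : ℝ → ℝ := fun s => (2*s+4)*(s*Real.log s - s + 1) - 3*(s-1)^2 with hG
  have hG1 : G 1 = 0 := by simp [hG]
  rcases le_total t 1 with h | h
  · -- antitone on Ioc 0 1
    have hanti : AntitoneOn G (Set.Ioc (0:ℝ) 1) := by
      apply antitoneOn_of_deriv_nonpos (convex_Ioc 0 1)
      · intro x hx
        exact ((ckp_G_deriv hx.1).continuousAt).continuousWithinAt
      · rw [interior_Ioc]
        intro x hx
        exact (ckp_G_deriv hx.1).differentiableAt.differentiableWithinAt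
      · rw [interior_Ioc]
        intro x hx
        rw [(ckp_G_deriv hx.1).deriv]
        have := (ckp_F_sign hx.1).2 hx.2.le
        linarith
    have := hanti (Set.mem_Ioc.mpr ⟨ht, h⟩) (Set.mem_Ioc.mpr ⟨one_pos, le_refl 1⟩) h
    rw [hG1] at this
    exact this
  · have hmono : MonotoneOn G (Set.Ici (1:ℝ)) := by
      apply monotoneOn_of_deriv_nonneg (convex_Ici 1)
      · intro x hx
        exact ((ckp_G_deriv (lt_of_lt_of_le one_pos hx)).continuousAt).continuousWithinAt
      · rw [interior_Ici]
        intro x hx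
        exact (ckp_G_deriv (lt_trans one_pos hx)).differentiableAt.differentiableWithinAt
      · rw [interior_Ici]
        intro x hx
        rw [(ckp_G_deriv (lt_trans one_pos hx)).deriv]
        have := (ckp_F_sign (lt_trans one_pos hx)).1 hx.le
        linarith
    have := hmono (Set.mem_Ici.mpr (le_refl 1)) (Set.mem_Ici.mpr h) h
    rw [hG1] at this
    exact this

/-- key pointwise inequality -/
lemma ckp_pointwise {a b : ℝ} (ha : 0 ≤ a) (hb : 0 < b) :
    3*(a-b)^2 ≤ (2*a+4*b)*(a*Real.log a - a*Real.log b - a + b) := by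
  rcases eq_or_lt_of_le ha with h | h
  · simp [← h]; nlinarith [sq_nonneg b]
  · have ht : 0 < a / b := div_pos h hb
    have hG := ckp_G_nonneg ht
    have hlog : Real.log (a/b) = Real.log a - Real.log b := Real.log_div h.ne' hb.ne'
    rw [hlog] at hG
    have hb2 : (0:ℝ) < b^2 := by positivity
    have := mul_le_mul_of_nonneg_left (sub_nonneg.mp hG) hb2.le
    have k1 : b^2 * (3*((a/b)-1)^2) = 3*(a-b)^2 := by field_simp
    have k2 : b^2 * ((2*(a/b)+4)*((a/b)*(Real.log a - Real.log b) - (a/b) + 1))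
        = (2*a+4*b)*(a*Real.log a - a*Real.log b - a + b) := by field_simp
    rw [k1, k2] at this
    exact this

lemma ckp_phi_nonneg {a b : ℝ} (ha : 0 ≤ a) (hb : 0 < b) :
    0 ≤ a*Real.log a - a*Real.log b - a + b := by
  rcases eq_or_lt_of_le ha with h | h
  · simp [← h]; linarith
  · have h1 := ckp_log_lb (div_pos h hb)
    rw [Real.log_div h.ne' hb.ne'] at h1
    have : a * (1 - 1/(a/b)) ≤ a * (Real.log a - Real.log b) :=
      mul_le_mul_of_nonneg_left h1 ha
    have hd : a * (1 - 1/(a/b)) = a - b := by field_simp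
    nlinarith

lemma ckp_species {α : Type*} [MeasurableSpace α] (m : Measure α) [IsFiniteMeasure m]
    (f : α → ℝ) (c K : ℝ) (hc : 0 < c)
    (hf : Measurable f) (h0 : ∀ x, 0 ≤ f x)
    (hfi : Integrable f m)
    (hfe : Integrable (fun x => f x * (Real.log (f x) - 1)) m)
    (hK : 2 * (∫ x, f x ∂m) + 4 * (c * (m Set.univ).toReal) ≤ 3 * K) :
    0 ≤ ∫ x, (f x * (Real.log (f x) - 1) - Real.log c * f x + c) ∂m ∧
    (∫ x, |f x - c| ∂m)^2 ≤ K * ∫ x, (f x * (Real.log (f x) - 1) - Real.log c * f x + c) ∂m := by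
  set φ : α → ℝ := fun x => f x * (Real.log (f x) - 1) - Real.log c * f x + c with hφdef
  have hφeq : ∀ x, φ x = f x * Real.log (f x) - f x * Real.log c - f x + c := by
    intro x; simp only [hφdef]; ring
  have hφ0 : ∀ x, 0 ≤ φ x := fun x => (hφeq x) ▸ ckp_phi_nonneg (h0 x) hc
  have hφm : Measurable φ := by
    rw [hφdef]
    exact ((hf.mul ((Real.measurable_log.comp hf).sub measurable_const)).sub
      (hf.const_mul _)).add_const c
  have hφint : Integrable φ m := by
    rw [hφdef]
    exact (hfe.sub (hfi.const_mul (Real.log c))).add (integrable_const c)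
  set h : α → ℝ := fun x => (2 * f x + 4 * c) / 3 with hhdef
  have hh0 : ∀ x, 0 ≤ h x := fun x => by
    have := h0 x; simp only [hhdef]; linarith
  have hhm : Measurable h := by
    rw [hhdef]; exact ((hf.const_mul 2).add_const (4*c)).div_const 3
  have hhint : Integrable h m := by
    rw [hhdef]; exact ((hfi.const_mul 2).add (integrable_const (4*c))).div_const 3
  clear_value φ h
  have hB0 : 0 ≤ ∫ x, φ x ∂m := integral_nonneg hφ0
  refine ⟨hB0, ?_⟩
  -- pointwise: |f x - c| ≤ √(h x) * √(φ x)
  have hpt : ∀ x, |f x - c| ≤ Real.sqrt (h x) * Real.sqrt (φ x) := by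
    intro x
    have h1 := ckp_pointwise (h0 x) hc
    have h2 : (f x - c)^2 ≤ h x * φ x := by
      rw [hφeq x]; simp only [hhdef]; linarith
    calc |f x - c| = Real.sqrt ((f x - c)^2) := (Real.sqrt_sq_eq_abs _).symm
      _ ≤ Real.sqrt (h x * φ x) := Real.sqrt_le_sqrt h2
      _ = Real.sqrt (h x) * Real.sqrt (φ x) := Real.sqrt_mul (hh0 x) _
  -- integrability of the product
  have hprodint : Integrable (fun x => Real.sqrt (h x) * Real.sqrt (φ x)) m := by
    apply Integrable.mono' ((hhint.add hφint).div_const 2)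
      (hhm.sqrt.mul hφm.sqrt).aestronglyMeasurable
    filter_upwards with x
    show ‖Real.sqrt (h x) * Real.sqrt (φ x)‖ ≤ (h x + φ x) / 2
    rw [Real.norm_of_nonneg (mul_nonneg (Real.sqrt_nonneg _) (Real.sqrt_nonneg _))]
    have s1 : Real.sqrt (h x) ^ 2 = h x := Real.sq_sqrt (hh0 x)
    have s2 : Real.sqrt (φ x) ^ 2 = φ x := Real.sq_sqrt (hφ0 x)
    have e : (Real.sqrt (h x) - Real.sqrt (φ x))^2
        = h x + φ x - 2*(Real.sqrt (h x)*Real.sqrt (φ x)) := by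
      rw [sub_sq, s1, s2]; ring
    have := sq_nonneg (Real.sqrt (h x) - Real.sqrt (φ x))
    linarith
  have step1 : (∫ x, |f x - c| ∂m) ≤ ∫ x, Real.sqrt (h x) * Real.sqrt (φ x) ∂m :=
    integral_mono (hfi.sub (integrable_const c)).abs hprodint hpt
  -- Hölder
  have hpq : Real.HolderConjugate 2 2 := Real.HolderConjugate.two_two
  have h2e : (ENNReal.ofReal (2:ℝ)) = 2 := by norm_num
  have hmemh : MemLp (fun x => Real.sqrt (h x)) (ENNReal.ofReal 2) m := by
    rw [h2e, memLp_two_iff_integrable_sq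
      hhm.sqrt.aestronglyMeasurable]
    apply hhint.congr
    filter_upwards with x
    exact (Real.sq_sqrt (hh0 x)).symm
  have hmemφ : MemLp (fun x => Real.sqrt (φ x)) (ENNReal.ofReal 2) m := by
    rw [h2e, memLp_two_iff_integrable_sq
      hφm.sqrt.aestronglyMeasurable]
    apply hφint.congr
    filter_upwards with x
    exact (Real.sq_sqrt (hφ0 x)).symm
  have step2 := integral_mul_le_Lp_mul_Lq_of_nonneg hpq
    (Filter.Eventually.of_forall fun x => Real.sqrt_nonneg (h x))
    (Filter.Eventually.of_forall fun x => Real.sqrt_nonneg (φ x)) hmemh hmemφ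
  have hsqh : ∀ x, Real.sqrt (h x) ^ (2:ℝ) = h x := by
    intro x; rw [Real.rpow_two]; exact Real.sq_sqrt (hh0 x)
  have hsqφ : ∀ x, Real.sqrt (φ x) ^ (2:ℝ) = φ x := by
    intro x; rw [Real.rpow_two]; exact Real.sq_sqrt (hφ0 x)
  simp only [hsqh, hsqφ] at step2
  set A := ∫ x, h x ∂m with hA
  set B := ∫ x, φ x ∂m with hB
  have hA0 : 0 ≤ A := integral_nonneg hh0
  have hrw : A ^ ((1:ℝ)/2) * B ^ ((1:ℝ)/2) = Real.sqrt A * Real.sqrt B := by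
    rw [Real.sqrt_eq_rpow, Real.sqrt_eq_rpow]
  rw [hrw] at step2
  have habs0 : 0 ≤ ∫ x, |f x - c| ∂m := integral_nonneg fun x => abs_nonneg _
  have hle : (∫ x, |f x - c| ∂m) ≤ Real.sqrt A * Real.sqrt B := le_trans step1 step2
  have hsq : (∫ x, |f x - c| ∂m)^2 ≤ A * B := by
    calc (∫ x, |f x - c| ∂m)^2 ≤ (Real.sqrt A * Real.sqrt B)^2 := by
          exact pow_le_pow_left₀ habs0 hle 2
      _ = A * B := by
          rw [mul_pow, Real.sq_sqrt hA0, Real.sq_sqrt hB0]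
  -- A ≤ K
  have hAval : A = (2 * (∫ x, f x ∂m) + 4 * c * (m Set.univ).toReal) / 3 := by
    rw [hA, hhdef]
    rw [integral_div, integral_add (hfi.const_mul 2) (integrable_const (4*c)),
      integral_const_mul, integral_const, smul_eq_mul, measureReal_def]
    ring
  have hAK : A ≤ K := by rw [hAval]; linarith
  calc (∫ x, |f x - c| ∂m)^2 ≤ A * B := hsq
    _ ≤ K * B := mul_le_mul_of_nonneg_right hAK hB0


lemma ckp_int_id {α : Type*} [MeasurableSpace α] (m : Measure α) [IsFiniteMeasure m]
    (f : α → ℝ) (c : ℝ) (hfi : Integrable f m)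
    (hfe : Integrable (fun x => f x * (Real.log (f x) - 1)) m) :
    ∫ x, (f x * (Real.log (f x) - 1) - Real.log c * f x + c) ∂m
      = (∫ x, f x * (Real.log (f x) - 1) ∂m) - Real.log c * (∫ x, f x ∂m)
        + c * (m Set.univ).toReal := by
  have h1 : Integrable (fun x => f x * (Real.log (f x) - 1) - Real.log c * f x) m :=
    hfe.sub (hfi.const_mul _)
  rw [integral_add h1 (integrable_const c),
    integral_sub hfe (hfi.const_mul _), integral_const_mul, integral_const, smul_eq_mul, measureReal_def]
  ring

/-- Theorem 5.1 of the paper: Csiszar–Kullback–Pinsker-type lower bound for the relative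
entropy `E(u,w,z) − E(u∞,w∞,z∞)` of the coupled bulk–surface system in terms of squared
`L¹` distances to the equilibrium, valid for all nonnegative functions satisfying the
conservation laws. -/
theorem csiszar_kullback_pinsker (Ω Γ : Type*) [MeasurableSpace Ω] [MeasurableSpace Γ]
    (μ : Measure Ω) (ν : Measure Γ) [IsFiniteMeasure μ] [IsFiniteMeasure ν]
    (hμ : 0 < μ Set.univ) (hν : 0 < ν Set.univ)
    (M₁ M₂ : ℝ) (hM₁ : 0 < M₁) (hM₂ : 0 < M₂)
    (uinf winf zinf : ℝ) (huinf : 0 < uinf) (hwinf : 0 < winf) (hzinf : 0 < zinf)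
    (heq1 : (μ Set.univ).toReal * uinf + (ν Set.univ).toReal * zinf = M₁)
    (heq2 : (ν Set.univ).toReal * (winf + zinf) = M₂)
    (heq3 : uinf * winf = zinf) :
    ∃ C > 0, ∀ (u : Ω → ℝ) (w z : Γ → ℝ),
      Measurable u → Measurable w → Measurable z →
      (∀ x, 0 ≤ u x) → (∀ y, 0 ≤ w y) → (∀ y, 0 ≤ z y) →
      Integrable u μ → Integrable w ν → Integrable z ν →
      Integrable (fun x => u x * (Real.log (u x) - 1)) μ →
      Integrable (fun y => w y * (Real.log (w y) - 1)) ν →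
      Integrable (fun y => z y * (Real.log (z y) - 1)) ν →
      (∫ x, u x ∂μ) + (∫ y, z y ∂ν) = M₁ →
      (∫ y, (w y + z y) ∂ν) = M₂ →
      C * ((∫ x, |u x - uinf| ∂μ) ^ 2 + (∫ y, |w y - winf| ∂ν) ^ 2
            + (∫ y, |z y - zinf| ∂ν) ^ 2)
        ≤ ((∫ x, u x * (Real.log (u x) - 1) ∂μ)
            + (∫ y, w y * (Real.log (w y) - 1) ∂ν)
            + (∫ y, z y * (Real.log (z y) - 1) ∂ν))
          - ((μ Set.univ).toReal * (uinf * (Real.log uinf - 1))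
            + (ν Set.univ).toReal * (winf * (Real.log winf - 1))
            + (ν Set.univ).toReal * (zinf * (Real.log zinf - 1))) := by
  refine ⟨1 / (2 * (M₁ + M₂)), by positivity, ?_⟩
  intro u w z hum hwm hzm hu0 hw0 hz0 hui hwi hzi hue hwe hze hc1 hc2
  set T := (μ Set.univ).toReal with hT
  set S := (ν Set.univ).toReal with hS
  have hT0 : 0 ≤ T := ENNReal.toReal_nonneg
  have hS0 : 0 ≤ S := ENNReal.toReal_nonneg
  have hIu : 0 ≤ ∫ x, u x ∂μ := integral_nonneg hu0
  have hIw : 0 ≤ ∫ y, w y ∂ν := integral_nonneg hw0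
  have hIz : 0 ≤ ∫ y, z y ∂ν := integral_nonneg hz0
  have hc2' : (∫ y, w y ∂ν) + (∫ y, z y ∂ν) = M₂ := by
    rw [← hc2]; exact (integral_add hwi hzi).symm
  have hTz : 0 ≤ S * zinf := mul_nonneg hS0 hzinf.le
  have hTu0 : 0 ≤ T * uinf := mul_nonneg hT0 huinf.le
  have hSw0 : 0 ≤ S * winf := mul_nonneg hS0 hwinf.le
  have hTu : T * uinf ≤ M₁ := by linarith
  have hSz : S * zinf ≤ M₁ := by linarith
  have heq2' : S * winf + S * zinf = M₂ := by rw [← mul_add]; exact heq2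
  have hSw : S * winf ≤ M₂ := by linarith
  have hu1 : (∫ x, u x ∂μ) ≤ M₁ := by linarith
  have hw1 : (∫ y, w y ∂ν) ≤ M₂ := by linarith
  have hz1 : (∫ y, z y ∂ν) ≤ M₁ := by linarith
  -- apply the species lemma
  have Hu := ckp_species μ u uinf (2*(M₁+M₂)) huinf hum hu0 hui hue (by linarith)
  have Hw := ckp_species ν w winf (2*(M₁+M₂)) hwinf hwm hw0 hwi hwe (by linarith)
  have Hz := ckp_species ν z zinf (2*(M₁+M₂)) hzinf hzm hz0 hzi hze (by linarith)
  have idu := ckp_int_id μ u uinf hui hue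
  have idw := ckp_int_id ν w winf hwi hwe
  have idz := ckp_int_id ν z zinf hzi hze
  rw [← hT] at idu
  rw [← hS] at idw idz
  have hδu : (∫ x, u x ∂μ) - T * uinf = -((∫ y, z y ∂ν) - S * zinf) := by linarith
  have hδw : (∫ y, w y ∂ν) - S * winf = -((∫ y, z y ∂ν) - S * zinf) := by linarith
  have hlogz : Real.log zinf = Real.log uinf + Real.log winf := by
    rw [← heq3, Real.log_mul huinf.ne' hwinf.ne']
  have hlin : Real.log uinf * ((∫ x, u x ∂μ) - T * uinf)
      + Real.log winf * ((∫ y, w y ∂ν) - S * winf)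
      + Real.log zinf * ((∫ y, z y ∂ν) - S * zinf) = 0 := by
    rw [hδu, hδw, hlogz]; ring
  have hsum : ((∫ x, u x * (Real.log (u x) - 1) ∂μ)
        + (∫ y, w y * (Real.log (w y) - 1) ∂ν)
        + (∫ y, z y * (Real.log (z y) - 1) ∂ν))
      - (T * (uinf * (Real.log uinf - 1))
        + S * (winf * (Real.log winf - 1))
        + S * (zinf * (Real.log zinf - 1)))
      = (∫ x, (u x * (Real.log (u x) - 1) - Real.log uinf * u x + uinf) ∂μ)
        + (∫ y, (w y * (Real.log (w y) - 1) - Real.log winf * w y + winf) ∂ν)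
        + (∫ y, (z y * (Real.log (z y) - 1) - Real.log zinf * z y + zinf) ∂ν) := by
    linear_combination -idu - idw - idz + hlin
  rw [hsum]
  set Bu := ∫ x, (u x * (Real.log (u x) - 1) - Real.log uinf * u x + uinf) ∂μ
  set Bw := ∫ y, (w y * (Real.log (w y) - 1) - Real.log winf * w y + winf) ∂ν
  set Bz := ∫ y, (z y * (Real.log (z y) - 1) - Real.log zinf * z y + zinf) ∂ν
  have hKpos : (0:ℝ) < 2 * (M₁ + M₂) := by linarith
  rw [one_div, inv_mul_le_iff₀ hKpos]
  have h1 := Hu.2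
  have h2 := Hw.2
  have h3 := Hz.2
  linarith [h1, h2, h3]
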